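/- Let T be a tree on n vertices with k ≥ 2 and α_k(T) = ((k−1)/k)·n. Then k divides n and T ∈ R^k_{n/k}, i.e., T can be obtained by starting from a tree on k vertices and repeatedly attaching a tree on k vertices via a single edge. -/

import Mathlib

set_option linter.unusedSectionVars false


open SimpleGraph

/-- A set `S` is a generalized `k`-independent set in `G` if the induced subgraph `G[S]`
contains no tree on `k` vertices, equivalently every connected component of `G[S]`
has at most `k - 1` vertices. -/
def IsGenKIndep {V : Type*} (G : SimpleGraph V) (k : ℕ) (S : Set V) : Prop :=
  ∀ c : (G.induce S).ConnectedComponent, Nat.card c.supp ≤ k - 1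

/-- The generalized `k`-independence number: the maximum size of a generalized
`k`-independent set. -/
noncomputable def alphaK {V : Type*} (G : SimpleGraph V) (k : ℕ) : ℕ :=
  sSup {m | ∃ S : Set V, IsGenKIndep G k S ∧ S.ncard = m}

/-- `InRk G k i S` says that the induced subgraph of `G` on `S` belongs to the
family `R_i^k`: it is obtained by attaching `i` `k`-vertex trees one by one,
each joined to the previous part by a single edge. -/
inductive InRk {V : Type*} (G : SimpleGraph V) (k : ℕ) : ℕ → Set V → Prop
  | base (S : Set V) (hcard : S.ncard = k) (htree : (G.induce S).IsTree) : InRk G k 1 S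
  | step (i : ℕ) (S B : Set V) (hS : InRk G k i S) (hdisj : Disjoint S B)
      (hcard : B.ncard = k) (htree : (G.induce B).IsTree)
      (hone : ∃! p : V × V, p.1 ∈ S ∧ p.2 ∈ B ∧ G.Adj p.1 p.2) :
      InRk G k (i + 1) (S ∪ B)


section Helpers

variable {V : Type*} {T : SimpleGraph V}
variable [DecidableEq V]

/-- `x` and `y` are connected by a walk of `T` whose support lies in `S`. -/
def Conn (T : SimpleGraph V) (S : Set V) (x y : V) : Prop :=
  ∃ w : T.Walk x y, ∀ z ∈ w.support, z ∈ S

/-- The connected component of `x` inside `S`. -/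
def Cmp (T : SimpleGraph V) (S : Set V) (x : V) : Set V := {y | Conn T S x y}

lemma Conn.mem_left {S : Set V} {x y : V} (h : Conn T S x y) : x ∈ S := by
  obtain ⟨w, hw⟩ := h; exact hw _ w.start_mem_support

lemma Conn.mem_right {S : Set V} {x y : V} (h : Conn T S x y) : y ∈ S := by
  obtain ⟨w, hw⟩ := h; exact hw _ w.end_mem_support

lemma conn_self {S : Set V} {x : V} (hx : x ∈ S) : Conn T S x x :=
  ⟨SimpleGraph.Walk.nil, by simp [hx]⟩

lemma Conn.symm {S : Set V} {x y : V} (h : Conn T S x y) : Conn T S y x := by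
  obtain ⟨w, hw⟩ := h
  exact ⟨w.reverse, by simpa [SimpleGraph.Walk.support_reverse] using hw⟩

lemma Conn.trans {S : Set V} {x y z : V} (h : Conn T S x y) (h' : Conn T S y z) :
    Conn T S x z := by
  obtain ⟨w, hw⟩ := h; obtain ⟨w', hw'⟩ := h'
  refine ⟨w.append w', fun a ha => ?_⟩
  rw [SimpleGraph.Walk.mem_support_append_iff] at ha
  exact ha.elim (hw a) (hw' a)

lemma cmp_subset {S : Set V} {x : V} : Cmp T S x ⊆ S := fun _ h => h.mem_right

lemma mem_cmp_self {S : Set V} {x : V} (hx : x ∈ S) : x ∈ Cmp T S x := conn_self hx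

lemma cmp_mono {S S' : Set V} (h : S ⊆ S') (x : V) : Cmp T S x ⊆ Cmp T S' x := by
  rintro y ⟨w, hw⟩; exact ⟨w, fun z hz => h (hw z hz)⟩

lemma cmp_eq_of_mem {S : Set V} {x y : V} (h : y ∈ Cmp T S x) : Cmp T S y = Cmp T S x := by
  ext z
  exact ⟨fun hz => Conn.trans h hz, fun hz => Conn.trans (Conn.symm h) hz⟩

lemma cmp_adj_extend {S : Set V} {x y z : V} (h : y ∈ Cmp T S x) (ha : T.Adj y z)
    (hz : z ∈ S) : z ∈ Cmp T S x := by
  obtain ⟨w, hw⟩ := h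
  refine ⟨w.concat ha, fun a haa => ?_⟩
  rw [SimpleGraph.Walk.support_concat, List.mem_append, List.mem_singleton] at haa
  rcases haa with h1 | h2
  · exact hw a h1
  · subst h2; exact hz

/-- every vertex on a witnessing walk is in the component -/
lemma mem_cmp_of_mem_support {S : Set V} {x y : V} (w : T.Walk x y)
    (hw : ∀ z ∈ w.support, z ∈ S) : ∀ z ∈ w.support, z ∈ Cmp T S x := by
  induction w with
  | nil => intro z hz; simp at hz; subst hz; exact conn_self (hw _ (by simp))
  | @cons a b c h p ih =>
    intro z hz
    rw [SimpleGraph.Walk.support_cons, List.mem_cons] at hz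
    rcases hz with rfl | hz
    · exact conn_self (hw _ (by simp))
    · have hb : b ∈ Cmp T S a :=
        ⟨SimpleGraph.Walk.cons h SimpleGraph.Walk.nil, by
          intro u hu
          simp only [SimpleGraph.Walk.support_cons, SimpleGraph.Walk.support_nil,
            List.mem_cons, List.mem_singleton] at hu
          rcases hu with rfl | rfl | h; · exact hw _ (by simp)
          · exact hw _ (by simp [SimpleGraph.Walk.support_cons])
          · cases h⟩
      have := ih (fun u hu => hw u (by simp [SimpleGraph.Walk.support_cons, hu])) z hz
      rw [← cmp_eq_of_mem hb]
      exact this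

lemma conn_cmp {S : Set V} {x y : V} (h : y ∈ Cmp T S x) : Conn T (Cmp T S x) x y := by
  obtain ⟨w, hw⟩ := h
  exact ⟨w, mem_cmp_of_mem_support w hw⟩

/-- `S`-connectedness of a set. -/
def SConn (T : SimpleGraph V) (A : Set V) : Prop := ∀ x ∈ A, ∀ y ∈ A, Conn T A x y

lemma sconn_cmp {S : Set V} (x : V) : SConn T (Cmp T S x) := by
  intro a ha b hb
  exact Conn.trans (Conn.symm (conn_cmp ha)) (conn_cmp hb)

/-- the embedding of an induced subgraph -/
def indEmb (T : SimpleGraph V) (S : Set V) : T.induce S ↪g T where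
  toFun := Subtype.val
  inj' := Subtype.val_injective
  map_rel_iff' := Iff.rfl

example (S : Set V) (a b : ↥S) : (T.induce S).Adj a b ↔ T.Adj ↑a ↑b := Iff.rfl

lemma reachable_induce_aux {S : Set V} :
    ∀ {x y : V} (w : T.Walk x y) (hw : ∀ z ∈ w.support, z ∈ S),
      (T.induce S).Reachable ⟨x, hw _ w.start_mem_support⟩ ⟨y, hw _ w.end_mem_support⟩ := by
  intro x y w
  induction w with
  | nil => intro hw; rfl
  | @cons a b c h p ih =>
    intro hw
    have hb : b ∈ S := hw _ (by simp [SimpleGraph.Walk.support_cons])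
    have h1 : (T.induce S).Adj ⟨a, hw _ (by simp)⟩ ⟨b, hb⟩ := h
    exact h1.reachable.trans (ih (fun z hz => hw z (by simp [SimpleGraph.Walk.support_cons, hz])))

lemma reachable_induce_iff {S : Set V} {x y : V} (hx : x ∈ S) (hy : y ∈ S) :
    (T.induce S).Reachable ⟨x, hx⟩ ⟨y, hy⟩ ↔ ∃ w : T.Walk x y, ∀ z ∈ w.support, z ∈ S := by
  constructor
  · rintro ⟨w⟩
    refine ⟨w.map (indEmb T S).toHom, ?_⟩
    intro z hz
    have hz' : z ∈ List.map (indEmb T S).toHom w.support := by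
      rw [← SimpleGraph.Walk.support_map]; exact hz
    rw [List.mem_map] at hz'
    obtain ⟨⟨a, ha⟩, _, rfl⟩ := hz'
    exact ha
  · rintro ⟨w, hw⟩
    exact reachable_induce_aux w hw

lemma val_image_supp {S : Set V} {v : V} (hv : v ∈ S) :
    Subtype.val '' ((T.induce S).connectedComponentMk ⟨v, hv⟩).supp = Cmp T S v := by
  ext y
  simp only [Set.mem_image]
  constructor
  · rintro ⟨⟨a, ha⟩, hmem, rfl⟩
    rw [ConnectedComponent.mem_supp_iff, ConnectedComponent.eq] at hmem
    have := (reachable_induce_iff ha hv).mp hmem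
    exact Conn.symm this
  · intro hy
    have hyS : y ∈ S := hy.mem_right
    refine ⟨⟨y, hyS⟩, ?_, rfl⟩
    rw [ConnectedComponent.mem_supp_iff, ConnectedComponent.eq]
    exact (reachable_induce_iff hyS hv).mpr (Conn.symm hy)

lemma isGenKIndep_iff (k : ℕ) (S : Set V) :
    IsGenKIndep T k S ↔ ∀ v ∈ S, (Cmp T S v).ncard ≤ k - 1 := by
  constructor
  · intro h v hv
    have := h ((T.induce S).connectedComponentMk ⟨v, hv⟩)
    rwa [Nat.card_coe_set_eq, ← Set.ncard_image_of_injective _ Subtype.val_injective,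
      val_image_supp hv] at this
  · intro h c
    induction c using SimpleGraph.ConnectedComponent.ind with
    | _ vv =>
    obtain ⟨v, hv⟩ := vv
    rw [Nat.card_coe_set_eq, ← Set.ncard_image_of_injective _ Subtype.val_injective,
      val_image_supp hv]
    exact h v hv

lemma isGenKIndep_empty (k : ℕ) : IsGenKIndep T k (∅ : Set V) := by
  rw [isGenKIndep_iff]
  intro v hv
  exact absurd hv (Set.notMem_empty v)

lemma walk_stay_left {S₁ S₂ : Set V} (hsep : ∀ a ∈ S₁, ∀ b ∈ S₂, ¬ T.Adj a b) :
    ∀ {x y : V} (w : T.Walk x y), (∀ z ∈ w.support, z ∈ S₁ ∪ S₂) → x ∈ S₁ →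
      ∀ z ∈ w.support, z ∈ S₁ := by
  intro x y w
  induction w with
  | nil =>
    intro _ hx z hz
    simp at hz; subst hz; exact hx
  | @cons a b c h p ih =>
    intro hw hx z hz
    have hb : b ∈ S₁ := by
      by_cases hb1 : b ∈ S₁
      · exact hb1
      · have : b ∈ S₁ ∪ S₂ := hw _ (by simp [SimpleGraph.Walk.support_cons])
        rcases this with h1 | h2
        · exact h1
        · exact absurd h (hsep a hx b h2)
    rw [SimpleGraph.Walk.support_cons, List.mem_cons] at hz
    rcases hz with rfl | hz
    · exact hx
    · exact ih (fun u hu => hw u (by simp [SimpleGraph.Walk.support_cons, hu])) hb z hz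

/-- no `T`-edges between `S₁ \ S₂`-parts: component of `x ∈ S₁` in the union is within `S₁`. -/
lemma cmp_union_left {S₁ S₂ : Set V} (hsep : ∀ a ∈ S₁, ∀ b ∈ S₂, ¬ T.Adj a b)
    {x : V} (hx : x ∈ S₁) : Cmp T (S₁ ∪ S₂) x = Cmp T S₁ x := by
  apply Set.Subset.antisymm
  · rintro y ⟨w, hw⟩
    exact ⟨w, walk_stay_left hsep w hw hx⟩
  · exact cmp_mono Set.subset_union_left x

lemma induce_isTree {A : Set V} (hacyc : T.IsAcyclic) (hA : SConn T A) (hne : A.Nonempty) :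
    (T.induce A).IsTree := by
  constructor
  · have : Nonempty ↥A := hne.to_subtype
    refine ⟨fun a b => ?_⟩
    obtain ⟨a, ha⟩ := a; obtain ⟨b, hb⟩ := b
    exact (reachable_induce_iff ha hb).mpr (hA a ha b hb)
  · intro v c hc
    exact hacyc (c.map (indEmb T A).toHom)
      (hc.map (indEmb T A).injective)

lemma not_end_mem_takeUntil {a b p : V} {P : T.Walk a b} (hP : P.IsPath)
    (hp : p ∈ P.support) (hpb : p ≠ b) : b ∉ (P.takeUntil p hp).support := by
  intro hb
  have hspec := SimpleGraph.Walk.take_spec P hp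
  have hnodup : P.support.Nodup := hP.support_nodup
  rw [← hspec, SimpleGraph.Walk.support_append, List.nodup_append] at hnodup
  refine hnodup.2.2 b hb b ?_ rfl
  have hbd : b ∈ (P.dropUntil p hp).support := SimpleGraph.Walk.end_mem_support _
  rw [SimpleGraph.Walk.support_eq_cons] at hbd
  rcases List.mem_cons.mp hbd with h1 | hbd'
  · exact absurd h1.symm hpb
  · exact hbd' 

lemma not_start_mem_dropUntil {a b p : V} {P : T.Walk a b} (hP : P.IsPath)
    (hp : p ∈ P.support) (hap : a ≠ p) : a ∉ (P.dropUntil p hp).support := by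
  intro ha
  have hspec := SimpleGraph.Walk.take_spec P hp
  have hnodup : P.support.Nodup := hP.support_nodup
  rw [← hspec, SimpleGraph.Walk.support_append, List.nodup_append] at hnodup
  refine hnodup.2.2 _ (SimpleGraph.Walk.start_mem_support _) a ?_ rfl
  rw [SimpleGraph.Walk.support_eq_cons] at ha
  rcases List.mem_cons.mp ha with h1 | ha'
  · exact absurd h1 hap
  · exact ha' 

/-- In an acyclic graph the two "sides" of an edge are disjoint. -/
lemma sides_disjoint {A : Set V} (hacyc : T.IsAcyclic) {u p : V} (hadj : T.Adj u p) :
    Disjoint (Cmp T (A \ {p}) u) (Cmp T (A \ {u}) p) := by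
  rw [Set.disjoint_left]
  rintro z ⟨w₁, hw₁⟩ ⟨w₂, hw₂⟩
  have hP₁ : w₁.bypass.IsPath := w₁.bypass_isPath
  have hP₂ : w₂.bypass.IsPath := w₂.bypass_isPath
  have hs₁ : ∀ x ∈ w₁.bypass.support, x ∈ A \ {p} :=
    fun x hx => hw₁ x (w₁.support_bypass_subset hx)
  have hs₂ : ∀ x ∈ w₂.bypass.support, x ∈ A \ {u} :=
    fun x hx => hw₂ x (w₂.support_bypass_subset hx)
  have hu2 : u ∉ w₂.bypass.support := fun h => (hs₂ u h).2 rfl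
  have hR : (SimpleGraph.Walk.cons hadj w₂.bypass).IsPath := hP₂.cons hu2
  have := SimpleGraph.isAcyclic_iff_path_unique.mp hacyc ⟨w₁.bypass, hP₁⟩
    ⟨SimpleGraph.Walk.cons hadj w₂.bypass, hR⟩
  apply (hs₁ p _).2 rfl
  rw [show w₁.bypass = SimpleGraph.Walk.cons hadj w₂.bypass from congrArg Subtype.val this]
  simp [SimpleGraph.Walk.support_cons]

/-- each vertex `y ≠ u` of a connected set lies in a branch at `u`. -/
lemma exists_branch {A : Set V} (hA : SConn T A) {u y : V} (hu : u ∈ A) (hy : y ∈ A)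
    (hne : y ≠ u) : ∃ c, T.Adj u c ∧ y ∈ Cmp T (A \ {u}) c := by
  obtain ⟨w, hw⟩ := hA u hu y hy
  obtain ⟨P, hP, hsup⟩ : ∃ P : T.Walk u y, P.IsPath ∧ ∀ z ∈ P.support, z ∈ A :=
    ⟨w.bypass, w.bypass_isPath, fun z hz => hw z (w.support_bypass_subset hz)⟩
  cases P with
  | nil => exact absurd rfl hne
  | @cons _ c _ h q =>
    rw [SimpleGraph.Walk.cons_isPath_iff] at hP
    refine ⟨c, h, q, fun z hz => ⟨hsup z (by simp [SimpleGraph.Walk.support_cons, hz]), ?_⟩⟩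
    intro hzu; subst hzu; exact hP.2 hz

/-- the two sides of an edge cover a connected set. -/
lemma sides_cover {A : Set V} (hA : SConn T A) {u p : V} (hu : u ∈ A) (hp : p ∈ A)
    (hadj : T.Adj u p) : A ⊆ Cmp T (A \ {p}) u ∪ Cmp T (A \ {u}) p := by
  intro y hy
  by_cases hyu : y = u
  · subst hyu; exact Or.inl (mem_cmp_self ⟨hy, hadj.ne⟩)
  by_cases hyp : y = p
  · subst hyp; exact Or.inr (mem_cmp_self ⟨hy, hadj.ne'⟩)
  obtain ⟨w, hw⟩ := hA u hu y hy
  obtain ⟨P, hP, hsup⟩ : ∃ P : T.Walk u y, P.IsPath ∧ ∀ z ∈ P.support, z ∈ A :=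
    ⟨w.bypass, w.bypass_isPath, fun z hz => hw z (w.support_bypass_subset hz)⟩
  by_cases hpP : p ∈ P.support
  · right
    have hud : u ∉ (P.dropUntil p hpP).support := not_start_mem_dropUntil hP hpP hadj.ne
    exact ⟨P.dropUntil p hpP, fun z hz =>
      ⟨hsup z (SimpleGraph.Walk.support_dropUntil_subset P hpP hz),
       fun hzu => hud (hzu ▸ hz)⟩⟩
  · left
    exact ⟨P, fun z hz => ⟨hsup z hz, fun hzp => hpP (hzp ▸ hz)⟩⟩

/-- the only possible edge between the two sides is the edge `(u,p)` itself. -/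
lemma crossing_edge {A : Set V} (hacyc : T.IsAcyclic) {u p : V} (hadj : T.Adj u p)
    {a b : V} (ha : a ∈ Cmp T (A \ {p}) u) (hb : b ∈ Cmp T (A \ {u}) p)
    (hab : T.Adj a b) : a = u ∧ b = p := by
  have hdisj := sides_disjoint (A := A) hacyc hadj
  have hbp : b = p := by
    by_contra hbp
    have hbA : b ∈ A := (cmp_subset hb).1
    have : b ∈ Cmp T (A \ {p}) u := cmp_adj_extend ha hab ⟨hbA, hbp⟩
    exact (Set.disjoint_left.mp hdisj this) hb
  subst hbp
  refine ⟨?_, rfl⟩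
  by_contra hau
  have haA : a ∈ A := (cmp_subset ha).1
  have : a ∈ Cmp T (A \ {u}) b := cmp_adj_extend hb hab.symm ⟨haA, hau⟩
  exact (Set.disjoint_left.mp hdisj ha) this

lemma branch_in_B {A : Set V} (hacyc : T.IsAcyclic) (hA : SConn T A) {u p : V}
    (hu : u ∈ A) (hp : p ∈ A) (hadj : T.Adj u p) {y : V}
    (hy : y ∈ Cmp T (A \ {p}) u) (hyu : y ≠ u) :
    ∃ c, T.Adj u c ∧ c ∈ A ∧ y ∈ Cmp T (A \ {u}) c ∧
      Cmp T (A \ {u}) c ⊆ Cmp T (A \ {p}) u \ {u} := by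
  have hyA : y ∈ A := (cmp_subset hy).1
  obtain ⟨c, hc, hyc⟩ := exists_branch hA hu hyA hyu
  have hcA : c ∈ A := (Conn.mem_left (show Conn T (A \ {u}) c y from hyc)).1
  refine ⟨c, hc, hcA, hyc, ?_⟩
  intro z hz
  have hzA : z ∈ A \ {u} := cmp_subset hz
  refine ⟨?_, hzA.2⟩
  have hcover := sides_cover hA hu hp hadj
  rcases hcover hzA.1 with hzB | hzB'
  · exact hzB
  · exfalso
    have h1 : Cmp T (A \ {u}) z = Cmp T (A \ {u}) c := cmp_eq_of_mem hz
    have h2 : Cmp T (A \ {u}) z = Cmp T (A \ {u}) p := cmp_eq_of_mem hzB'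
    have : y ∈ Cmp T (A \ {u}) p := by rw [← h2, h1]; exact hyc
    exact Set.disjoint_left.mp (sides_disjoint (A := A) hacyc hadj) hy this

lemma diff_eq_other_side {A : Set V} (hacyc : T.IsAcyclic) (hA : SConn T A) {u p : V}
    (hu : u ∈ A) (hp : p ∈ A) (hadj : T.Adj u p) :
    A \ Cmp T (A \ {p}) u = Cmp T (A \ {u}) p := by
  have hdisj := sides_disjoint (A := A) hacyc hadj
  have hcover := sides_cover hA hu hp hadj
  apply Set.Subset.antisymm
  · rintro y ⟨hyA, hyB⟩
    rcases hcover hyA with h | h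
    · exact absurd h hyB
    · exact h
  · intro z hz
    exact ⟨(cmp_subset hz).1, fun hzB => Set.disjoint_left.mp hdisj hzB hz⟩

lemma indep_union {k : ℕ} {S₁ S₂ : Set V} (h₁ : IsGenKIndep T k S₁) (h₂ : IsGenKIndep T k S₂)
    (hsep : ∀ a ∈ S₁, ∀ b ∈ S₂, ¬ T.Adj a b) : IsGenKIndep T k (S₁ ∪ S₂) := by
  rw [isGenKIndep_iff] at h₁ h₂ ⊢
  intro v hv
  rcases hv with hv | hv
  · rw [cmp_union_left hsep hv]; exact h₁ v hv
  · rw [Set.union_comm, cmp_union_left (fun a ha b hb hab => hsep b hb a ha hab.symm) hv]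
    exact h₂ v hv

section Fin
variable [Fintype V]

lemma pivot {k : ℕ} (hk : 1 ≤ k) (hacyc : T.IsAcyclic) {A : Set V} (hA : SConn T A)
    (hbig : ∃ p u, p ∈ A ∧ u ∈ A ∧ T.Adj p u ∧ k ≤ (Cmp T (A \ {p}) u).ncard) :
    ∃ p u, p ∈ A ∧ u ∈ A ∧ T.Adj p u ∧ k ≤ (Cmp T (A \ {p}) u).ncard ∧
      A \ Cmp T (A \ {p}) u = Cmp T (A \ {u}) p ∧
      u ∈ Cmp T (A \ {p}) u ∧ p ∈ Cmp T (A \ {u}) p ∧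
      (∀ y ∈ Cmp T (A \ {p}) u, y ≠ u → (Cmp T (A \ {u}) y).ncard ≤ k - 1) := by
  set Ω : Set ℕ :=
    {s | k ≤ s ∧ ∃ p u, p ∈ A ∧ u ∈ A ∧ T.Adj p u ∧ (Cmp T (A \ {p}) u).ncard = s} with hΩ
  have hne : Ω.Nonempty := by
    obtain ⟨p, u, hp, hu, hadj, hcard⟩ := hbig
    exact ⟨(Cmp T (A \ {p}) u).ncard, hcard, p, u, hp, hu, hadj, rfl⟩
  obtain ⟨hks, p, u, hp, hu, hadj, hcard⟩ := Nat.sInf_mem hne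
  have hmin : ∀ t ∈ Ω, sInf Ω ≤ t := fun t ht => Nat.sInf_le ht
  refine ⟨p, u, hp, hu, hadj, hcard ▸ hks, ?_, ?_, ?_, ?_⟩
  · exact diff_eq_other_side hacyc hA hu hp hadj.symm
  · exact mem_cmp_self ⟨hu, hadj.ne'⟩
  · exact mem_cmp_self ⟨hp, hadj.ne⟩
  · intro y hy hyu
    obtain ⟨c, hc, hcA, hyc, hsub⟩ := branch_in_B hacyc hA hu hp hadj.symm hy hyu
    have huB : u ∈ Cmp T (A \ {p}) u := mem_cmp_self ⟨hu, hadj.ne'⟩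
    have ht : (Cmp T (A \ {u}) c).ncard ≤ (Cmp T (A \ {p}) u).ncard - 1 := by
      have h1 : (Cmp T (A \ {u}) c).ncard ≤ (Cmp T (A \ {p}) u \ {u}).ncard :=
        Set.ncard_le_ncard hsub (Set.toFinite _)
      rwa [Set.ncard_diff_singleton_of_mem huB] at h1
    have hlt : (Cmp T (A \ {u}) c).ncard < sInf Ω := by omega
    have hle : (Cmp T (A \ {u}) c).ncard ≤ k - 1 := by
      by_contra hcon
      push_neg at hcon
      have hkt : k ≤ (Cmp T (A \ {u}) c).ncard := by omega
      exact absurd (hmin _ ⟨hkt, u, c, hu, hcA, hc, rfl⟩) (by omega)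
    rwa [cmp_eq_of_mem hyc]

lemma exists_big_pair {k : ℕ} {A : Set V} (hA : SConn T A) (h2 : 2 * k ≤ A.ncard) (hk : 1 ≤ k) :
    ∃ p u, p ∈ A ∧ u ∈ A ∧ T.Adj p u ∧ k ≤ (Cmp T (A \ {p}) u).ncard := by
  have h1 : 1 < A.ncard := by omega
  obtain ⟨x, y, hx, hy, hxy⟩ := (Set.one_lt_ncard_iff (Set.toFinite _)).mp h1
  obtain ⟨w, hw⟩ := hA x hx y hy
  cases w with
  | nil => exact absurd rfl hxy
  | @cons _ b _ h q =>
    have hb : b ∈ A := hw _ (by simp [SimpleGraph.Walk.support_cons])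
    have hcover := sides_cover hA hb hx h.symm
    have hle : A.ncard ≤ (Cmp T (A \ {x}) b).ncard + (Cmp T (A \ {b}) x).ncard := by
      calc A.ncard ≤ (Cmp T (A \ {x}) b ∪ Cmp T (A \ {b}) x).ncard :=
            Set.ncard_le_ncard hcover (Set.toFinite _)
        _ ≤ _ := Set.ncard_union_le _ _
    by_cases hc1 : k ≤ (Cmp T (A \ {x}) b).ncard
    · exact ⟨x, b, hx, hb, h, hc1⟩
    · exact ⟨b, x, hb, hx, h.symm, by omega⟩

lemma le_alphaK {k : ℕ} {S : Set V} (hS : IsGenKIndep T k S) : S.ncard ≤ alphaK T k := by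
  refine le_csSup ⟨Nat.card V, ?_⟩ ⟨S, hS, rfl⟩
  rintro m ⟨S', _, rfl⟩
  calc S'.ncard ≤ (Set.univ : Set V).ncard := Set.ncard_le_ncard (Set.subset_univ _) (Set.toFinite _)
    _ = Nat.card V := Set.ncard_univ V

lemma lower_bound {k : ℕ} (hk : 1 ≤ k) (hacyc : T.IsAcyclic) :
    ∀ (N : ℕ) (A : Set V), A.ncard = N → SConn T A →
      ∃ S, S ⊆ A ∧ IsGenKIndep T k S ∧ A.ncard ≤ S.ncard + A.ncard / k := by
  intro N
  induction N using Nat.strong_induction_on with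
  | _ N ih =>
  intro A hN hA
  by_cases hlt : A.ncard < k
  · refine ⟨A, subset_rfl, ?_, le_self_add⟩
    rw [isGenKIndep_iff]
    intro v hv
    have h1 : (Cmp T A v).ncard ≤ A.ncard := Set.ncard_le_ncard cmp_subset (Set.toFinite _)
    omega
  · push_neg at hlt
    by_cases hbig : ∃ p u, p ∈ A ∧ u ∈ A ∧ T.Adj p u ∧ k ≤ (Cmp T (A \ {p}) u).ncard
    · obtain ⟨p, u, hp, hu, hadj, hkB, hAB, huB, hpB', hbr⟩ := pivot hk hacyc hA hbig
      have hBA : Cmp T (A \ {p}) u ⊆ A := cmp_subset.trans Set.diff_subset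
      have hcardB' : (Cmp T (A \ {u}) p).ncard = A.ncard - (Cmp T (A \ {p}) u).ncard := by
        rw [← hAB, Set.ncard_diff hBA (Set.toFinite _)]
      have hBle : (Cmp T (A \ {p}) u).ncard ≤ A.ncard :=
        Set.ncard_le_ncard hBA (Set.toFinite _)
      have hlt' : (Cmp T (A \ {u}) p).ncard < N := by omega
      obtain ⟨S', hS'sub, hS'ind, hS'card⟩ := ih _ hlt' (Cmp T (A \ {u}) p) rfl (sconn_cmp _)
      have hsep : ∀ a ∈ S', ∀ b ∈ Cmp T (A \ {p}) u \ {u}, ¬ T.Adj a b := by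
        intro a ha b hb hab
        exact hb.2 (crossing_edge hacyc hadj.symm hb.1 (hS'sub ha) hab.symm).1
      have hindB : IsGenKIndep T k (Cmp T (A \ {p}) u \ {u}) := by
        rw [isGenKIndep_iff]
        intro v hv
        have hsub : Cmp T (A \ {p}) u \ {u} ⊆ A \ {u} := by
          intro z hz
          exact ⟨(cmp_subset hz.1).1, hz.2⟩
        calc (Cmp T (Cmp T (A \ {p}) u \ {u}) v).ncard
            ≤ (Cmp T (A \ {u}) v).ncard :=
              Set.ncard_le_ncard (cmp_mono hsub v) (Set.toFinite _)
          _ ≤ k - 1 := hbr v hv.1 hv.2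
      refine ⟨S' ∪ (Cmp T (A \ {p}) u \ {u}), ?_, indep_union hS'ind hindB hsep, ?_⟩
      · apply Set.union_subset
        · exact hS'sub.trans (cmp_subset.trans Set.diff_subset)
        · exact Set.diff_subset.trans hBA
      · have hdisj' : Disjoint S' (Cmp T (A \ {p}) u \ {u}) := by
          apply Set.disjoint_of_subset hS'sub Set.diff_subset
          rw [← hAB]
          exact Set.disjoint_sdiff_left
        rw [Set.ncard_union_eq hdisj' (Set.toFinite _) (Set.toFinite _),
          Set.ncard_diff_singleton_of_mem huB]
        rw [hcardB'] at hS'card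
        have hdiv : (A.ncard - (Cmp T (A \ {p}) u).ncard) / k + 1 ≤ A.ncard / k := by
          have h2 : (A.ncard - (Cmp T (A \ {p}) u).ncard) / k ≤ (A.ncard - k) / k :=
            Nat.div_le_div_right (by omega)
          have h3 : (A.ncard - k) / k + 1 = A.ncard / k := by
            rw [← Nat.add_div_right _ (by omega : 0 < k), Nat.sub_add_cancel hlt]
          omega
        omega
    · push_neg at hbig
      have hAne : A.Nonempty := Set.nonempty_of_ncard_ne_zero (by omega)
      obtain ⟨u, hu⟩ := hAne
      have hind : IsGenKIndep T k (A \ {u}) := by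
        rw [isGenKIndep_iff]
        intro v hv
        obtain ⟨c, hc, hvc⟩ := exists_branch hA hu hv.1 hv.2
        have hcA : c ∈ A := (Conn.mem_left (show Conn T (A \ {u}) c v from hvc)).1
        rw [cmp_eq_of_mem hvc]
        have := hbig u c hu hcA hc
        omega
      refine ⟨A \ {u}, Set.diff_subset, hind, ?_⟩
      have h1 : 1 ≤ A.ncard / k := (Nat.one_le_div_iff (by omega)).mpr hlt
      rw [Set.ncard_diff_singleton_of_mem hu]
      omega

lemma key {k : ℕ} (hk : 2 ≤ k) (hacyc : T.IsAcyclic) :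
    ∀ (m : ℕ), 1 ≤ m → ∀ A : Set V, SConn T A → A.ncard = k * m →
      (∀ S, S ⊆ A → IsGenKIndep T k S → S.ncard + m ≤ k * m) → InRk T k m A := by
  intro m hm
  induction m, hm using Nat.le_induction with
  | base =>
    intro A hA hcard hub
    have hne : A.Nonempty := Set.nonempty_of_ncard_ne_zero (by rw [hcard]; omega)
    exact InRk.base A (by rw [hcard, mul_one]) (induce_isTree hacyc hA hne)
  | succ m hm ihm =>
    intro A hA hcard hub
    have hk1 : 1 ≤ k := by omega
    have hbigex := exists_big_pair hA (by rw [hcard]; nlinarith) hk1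
    obtain ⟨p, u, hp, hu, hadj, hkB, hAB, huB, hpB', hbr⟩ := pivot hk1 hacyc hA hbigex
    have hBA : Cmp T (A \ {p}) u ⊆ A := cmp_subset.trans Set.diff_subset
    have hcardB' : (Cmp T (A \ {u}) p).ncard = A.ncard - (Cmp T (A \ {p}) u).ncard := by
      rw [← hAB, Set.ncard_diff hBA (Set.toFinite _)]
    have hBle : (Cmp T (A \ {p}) u).ncard ≤ A.ncard :=
      Set.ncard_le_ncard hBA (Set.toFinite _)
    have hindB : IsGenKIndep T k (Cmp T (A \ {p}) u \ {u}) := by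
      rw [isGenKIndep_iff]
      intro v hv
      have hsub : Cmp T (A \ {p}) u \ {u} ⊆ A \ {u} := by
        intro z hz
        exact ⟨(cmp_subset hz.1).1, hz.2⟩
      calc (Cmp T (Cmp T (A \ {p}) u \ {u}) v).ncard
          ≤ (Cmp T (A \ {u}) v).ncard :=
            Set.ncard_le_ncard (cmp_mono hsub v) (Set.toFinite _)
        _ ≤ k - 1 := hbr v hv.1 hv.2
    have hBltA : (Cmp T (A \ {p}) u).ncard < A.ncard := by
      have : p ∈ A \ Cmp T (A \ {p}) u := by
        rw [hAB]; exact hpB'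
      have h2 := Set.ncard_lt_ncard (Set.ssubset_iff_of_subset hBA |>.mpr ⟨p, this.1, this.2⟩)
        (Set.toFinite _)
      exact h2
    -- generic indep-union construction
    have hunion : ∀ S', S' ⊆ Cmp T (A \ {u}) p → IsGenKIndep T k S' →
        IsGenKIndep T k (S' ∪ (Cmp T (A \ {p}) u \ {u})) ∧
        (S' ∪ (Cmp T (A \ {p}) u \ {u})).ncard
          = S'.ncard + ((Cmp T (A \ {p}) u).ncard - 1) ∧
        (S' ∪ (Cmp T (A \ {p}) u \ {u})) ⊆ A := by
      intro S' hS'sub hS'ind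
      have hsep : ∀ a ∈ S', ∀ b ∈ Cmp T (A \ {p}) u \ {u}, ¬ T.Adj a b := by
        intro a ha b hb hab
        exact hb.2 (crossing_edge hacyc hadj.symm hb.1 (hS'sub ha) hab.symm).1
      have hdisj' : Disjoint S' (Cmp T (A \ {p}) u \ {u}) := by
        apply Set.disjoint_of_subset hS'sub Set.diff_subset
        rw [← hAB]
        exact Set.disjoint_sdiff_left
      refine ⟨indep_union hS'ind hindB hsep, ?_, ?_⟩
      · rw [Set.ncard_union_eq hdisj' (Set.toFinite _) (Set.toFinite _),
          Set.ncard_diff_singleton_of_mem huB]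
      · apply Set.union_subset
        · exact hS'sub.trans (cmp_subset.trans Set.diff_subset)
        · exact Set.diff_subset.trans hBA
    have hs : (Cmp T (A \ {p}) u).ncard = k := by
      by_contra hne
      have hsge : k + 1 ≤ (Cmp T (A \ {p}) u).ncard := by omega
      obtain ⟨S', hS'sub, hS'ind, hS'card⟩ :=
        lower_bound hk1 hacyc _ (Cmp T (A \ {u}) p) rfl (sconn_cmp _)
      obtain ⟨hind, hcardU, hsubU⟩ := hunion S' hS'sub hS'ind
      have hub' := hub _ hsubU hind
      rw [hcardU] at hub'
      have hdivle : (Cmp T (A \ {u}) p).ncard / k ≤ m - 1 := by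
        have h1 : (Cmp T (A \ {u}) p).ncard ≤ k * m - 1 := by
          rw [hcardB', hcard]
          have : k * (m + 1) = k * m + k := by ring
          omega
        have h2 : (Cmp T (A \ {u}) p).ncard / k ≤ (k * m - 1) / k := Nat.div_le_div_right h1
        have h3 : (k * m - 1) / k < m := by
          rw [Nat.div_lt_iff_lt_mul (by omega : 0 < k)]
          have hkm : 1 ≤ k * m := Nat.mul_pos (by omega) (by omega)
          have hcm : m * k = k * m := Nat.mul_comm m k
          omega
        omega
      have e1 : (Cmp T (A \ {u}) p).ncard = k * (m + 1) - (Cmp T (A \ {p}) u).ncard := by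
        rw [hcardB', hcard]
      have hexp : k * (m + 1) = k * m + k := by ring
      rw [hcard] at hBle
      omega
    have hmain : InRk T k m (Cmp T (A \ {u}) p) := by
      refine ihm (Cmp T (A \ {u}) p) (sconn_cmp _) ?_ ?_
      · rw [hcardB', hs, hcard]
        have : k * (m + 1) = k * m + k := by ring
        omega
      · intro S hSsub hSind
        by_contra hcon
        push_neg at hcon
        obtain ⟨hind, hcardU, hsubU⟩ := hunion S hSsub hSind
        have hub' := hub _ hsubU hind
        rw [hcardU, hs] at hub'
        have hexp : k * (m + 1) = k * m + k := by ring
        have hScard : (Cmp T (A \ {u}) p).ncard = k * m := by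
          rw [hcardB', hs, hcard]
          omega
        omega
    have hdisj : Disjoint (Cmp T (A \ {u}) p) (Cmp T (A \ {p}) u) := by
      rw [← hAB]
      exact Set.disjoint_sdiff_left
    have hone : ∃! q : V × V, q.1 ∈ Cmp T (A \ {u}) p ∧ q.2 ∈ Cmp T (A \ {p}) u ∧
        T.Adj q.1 q.2 := by
      refine ⟨(p, u), ⟨hpB', huB, hadj⟩, ?_⟩
      rintro ⟨a, b⟩ ⟨ha, hb, hab⟩
      obtain ⟨h1, h2⟩ := crossing_edge hacyc hadj.symm hb ha hab.symm
      simp only [Prod.mk.injEq]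
      exact ⟨h2, h1⟩
    have hstep := InRk.step m (Cmp T (A \ {u}) p) (Cmp T (A \ {p}) u) hmain hdisj hs
      (induce_isTree hacyc (sconn_cmp _) ⟨u, huB⟩) hone
    have hAeq : Cmp T (A \ {u}) p ∪ Cmp T (A \ {p}) u = A := by
      rw [← hAB]
      exact Set.diff_union_of_subset hBA
    rwa [hAeq] at hstep

end Fin

end Helpers

/-- If a tree `T` on `n` vertices satisfies `α_k(T) = ((k-1)/k)·n`, then `k ∣ n` and
`T ∈ R^k_{n/k}`. -/
theorem mem_Rk_of_alphaK_eq {V : Type*} [Fintype V] (T : SimpleGraph V) (hT : T.IsTree)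
    (k : ℕ) (hk : 2 ≤ k)
    (heq : (alphaK T k : ℚ) = ((k : ℚ) - 1) / k * (Nat.card V)) :
    k ∣ Nat.card V ∧ InRk T k (Nat.card V / k) Set.univ := by
  classical
  have hconn : T.Connected := hT.isConnected
  have hacyc : T.IsAcyclic := hT.IsAcyclic
  have hne : Nonempty V := hconn.nonempty
  have hk0 : (k : ℚ) ≠ 0 := Nat.cast_ne_zero.mpr (by omega)
  have hmulQ : (alphaK T k : ℚ) * k = ((k : ℚ) - 1) * (Nat.card V) := by
    rw [heq]; field_simp
  have hcast : ((k : ℚ) - 1) = ((k - 1 : ℕ) : ℚ) := by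
    have h1 : 1 ≤ k := by omega
    push_cast [Nat.cast_sub h1]
    ring
  have hmulN : (alphaK T k) * k = (k - 1) * (Nat.card V) := by
    have := hmulQ
    rw [hcast] at this
    exact_mod_cast this
  have hdvd : k ∣ Nat.card V := by
    have h1 : k ∣ (k - 1) * (Nat.card V) := ⟨alphaK T k, by rw [← hmulN]; ring⟩
    have hcop : Nat.Coprime k (k - 1) := by
      have h2 : Nat.Coprime (k - 1 + 1) (k - 1) :=
        Nat.coprime_self_add_left.mpr (Nat.coprime_one_left _)
      have h3 : k - 1 + 1 = k := by omega
      rwa [h3] at h2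
    exact hcop.dvd_of_dvd_mul_left h1
  refine ⟨hdvd, ?_⟩
  obtain ⟨m, hm⟩ := hdvd
  have hnpos : 0 < Nat.card V := Nat.card_pos
  have hm1 : 1 ≤ m := by
    rcases Nat.eq_zero_or_pos m with h | h
    · rw [h, mul_zero] at hm; omega
    · exact h
  have hdivm : Nat.card V / k = m := by
    rw [hm]; exact Nat.mul_div_cancel_left m (by omega)
  rw [hdivm]
  have halpha : alphaK T k = (k - 1) * m := by
    have h1 : (alphaK T k) * k = ((k - 1) * m) * k := by
      rw [hmulN, hm]; ring
    exact Nat.eq_of_mul_eq_mul_right (by omega) h1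
  have hub : ∀ S, S ⊆ (Set.univ : Set V) → IsGenKIndep T k S → S.ncard + m ≤ k * m := by
    intro S _ hS
    have h1 : S.ncard ≤ alphaK T k := le_alphaK hS
    rw [halpha] at h1
    have h2 : (k - 1) * m = k * m - m := Nat.sub_one_mul k m
    have h3 : m ≤ k * m := Nat.le_mul_of_pos_left m (by omega)
    omega
  have hsconn : SConn T (Set.univ : Set V) := by
    intro x _ y _
    obtain ⟨w⟩ := hconn.preconnected x y
    exact ⟨w, fun z _ => trivial⟩
  have hcard : (Set.univ : Set V).ncard = k * m := by
    rw [Set.ncard_univ, hm]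
  exact key hk hacyc m hm1 Set.univ hsconn hcard hub
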